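/- Suppose p, q are nonzero coprime integers with 7q² + 59p² = 3^ω for some ω > 0 and pq ≡ −1 (mod 3). Let x = |A(p,q)|/3⁵ and y = |B(p,q)|/3⁵. Then x and y are coprime positive integers satisfying 7x² + 59y² = 3^(2ω−5). -/

import Mathlib

def A (p q : ℤ) : ℤ := 59*p^2 - 236*p*q - 7*q^2
def B (p q : ℤ) : ℤ := -118*p^2 - 14*p*q + 14*q^2

lemma zmod3_fact : ∀ P Q : ZMod 3, P*Q = -1 → P + 2*Q ≠ 0 ∧ P ≠ 0 ∧ Q ≠ 0 := by decide

lemma zmod5_fact : ∀ P Q : ZMod 5, 59*P^2 - 236*P*Q - 7*Q^2 = 0 → P = 0 ∧ Q = 0 := by decide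

lemma zmod11_fact : ∀ P Q : ZMod 11, -118*P^2 - 14*P*Q + 14*Q^2 = 0 → P = 0 ∧ Q = 0 := by
  decide

theorem stmt5 (p q : ℤ) (hp : p ≠ 0) (hq : q ≠ 0) (hcop : Int.gcd p q = 1)
    (ω : ℕ) (hω : 0 < ω) (h : 7*q^2 + 59*p^2 = 3^ω)
    (hmod : p * q ≡ -1 [ZMOD 3])
    (x y : ℤ) (hx : x = |A p q| / 3^5) (hy : y = |B p q| / 3^5) :
    0 < x ∧ 0 < y ∧ Int.gcd x y = 1 ∧ 7*x^2 + 59*y^2 = 3^(2*ω - 5) := by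
  -- basic positivity of squares
  have hp0 : (0:ℤ) < p^2 := by positivity
  have hq0 : (0:ℤ) < q^2 := by positivity
  have hp1 : (1:ℤ) ≤ p^2 := hp0
  have hq1 : (1:ℤ) ≤ q^2 := hq0
  -- ω ≥ 5
  have hω5 : 5 ≤ ω := by
    by_contra hc
    push_neg at hc
    obtain ⟨a0, ha0⟩ : ∃ a0 : ℤ, p^2 = a0 := ⟨_, rfl⟩
    obtain ⟨b0, hb0⟩ : ∃ b0 : ℤ, q^2 = b0 := ⟨_, rfl⟩
    rw [ha0, hb0] at h
    rw [ha0] at hp1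
    rw [hb0] at hq1
    interval_cases ω <;> norm_num at h <;> omega
  -- mod 3 facts
  have hPQ : ((p : ZMod 3)) * (q : ZMod 3) = -1 := by
    have h1 : ((p*q : ℤ) : ZMod 3) = ((-1 : ℤ) : ZMod 3) :=
      (ZMod.intCast_eq_intCast_iff _ _ _).mpr hmod
    push_cast at h1
    exact h1
  obtain ⟨hs3, hp3z, hq3z⟩ := zmod3_fact _ _ hPQ
  have hP3 : ¬ (3:ℤ) ∣ p := by
    intro hd
    exact hp3z ((ZMod.intCast_zmod_eq_zero_iff_dvd p 3).mpr (by exact_mod_cast hd))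
  have hQ3 : ¬ (3:ℤ) ∣ q := by
    intro hd
    exact hq3z ((ZMod.intCast_zmod_eq_zero_iff_dvd q 3).mpr (by exact_mod_cast hd))
  have hS3 : ¬ (3:ℤ) ∣ (p + 2*q) := by
    intro hd
    apply hs3
    have := (ZMod.intCast_zmod_eq_zero_iff_dvd (p + 2*q) 3).mpr (by exact_mod_cast hd)
    push_cast at this
    linear_combination this
  -- 243 divides S
  have hS5 : (243:ℤ) ∣ (7*q^2 + 59*p^2) := by
    rw [h, show (243:ℤ) = 3^5 by norm_num]
    exact pow_dvd_pow 3 hω5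
  -- 243 divides p - 2q
  have hD : (243:ℤ) ∣ (p - 2*q) := by
    have h59 : (243:ℤ) ∣ 59*((p-2*q)*(p+2*q)) := by
      have e : 59*((p-2*q)*(p+2*q)) = (7*q^2+59*p^2) - 243*q^2 := by ring
      rw [e]
      exact dvd_sub hS5 ⟨q^2, rfl⟩
    have hcop59 : IsCoprime (243:ℤ) 59 := by
      rw [Int.isCoprime_iff_gcd_eq_one]
      norm_num
    have h1 : (243:ℤ) ∣ (p-2*q)*(p+2*q) := hcop59.dvd_of_dvd_mul_left h59
    have hcop3 : IsCoprime ((3:ℤ)^5) (p+2*q) := by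
      apply IsCoprime.pow_left
      rw [Int.prime_three.coprime_iff_not_dvd]
      exact hS3
    have h2 : ((3:ℤ)^5) ∣ (p-2*q)*(p+2*q) := by
      rw [show ((3:ℤ)^5 : ℤ) = 243 by norm_num]; exact h1
    exact (show ((3:ℤ)^5 : ℤ) = 243 by norm_num) ▸ hcop3.dvd_of_dvd_mul_right h2
  -- 243 divides A and B
  have hA243 : (243:ℤ) ∣ A p q := by
    have e : A p q = (7*q^2+59*p^2) - 236*q*(p-2*q) - 486*q^2 := by unfold A; ring
    rw [e]
    exact dvd_sub (dvd_sub hS5 (Dvd.dvd.mul_left hD (236*q))) ⟨2*q^2, by ring⟩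
  have hB243 : (243:ℤ) ∣ B p q := by
    have e : B p q = -2*(7*q^2+59*p^2) - 14*q*(p-2*q) := by unfold B; ring
    rw [e]
    exact dvd_sub (Dvd.dvd.mul_left hS5 (-2)) (Dvd.dvd.mul_left hD (14*q))
  obtain ⟨a, haA⟩ := hA243
  obtain ⟨b, hbB⟩ := hB243
  -- x = |a|, y = |b|
  have hxa : x = |a| := by
    rw [hx, haA, show ((3:ℤ)^5 : ℤ) = 243 by norm_num, abs_mul,
      show |(243:ℤ)| = 243 by norm_num]
    exact Int.mul_ediv_cancel_left _ (by norm_num)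
  have hyb : y = |b| := by
    rw [hy, hbB, show ((3:ℤ)^5 : ℤ) = 243 by norm_num, abs_mul,
      show |(243:ℤ)| = 243 by norm_num]
    exact Int.mul_ediv_cancel_left _ (by norm_num)
  -- A ≠ 0
  have hAne : A p q ≠ 0 := by
    intro h0
    have h5 : ((A p q : ℤ) : ZMod 5) = 0 := by rw [h0]; simp
    unfold A at h5
    push_cast at h5
    obtain ⟨hp5, hq5⟩ := zmod5_fact (p : ZMod 5) (q : ZMod 5) (by linear_combination h5)
    have hdp : (5:ℤ) ∣ p := by exact_mod_cast (ZMod.intCast_zmod_eq_zero_iff_dvd p 5).mp hp5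
    have hdq : (5:ℤ) ∣ q := by exact_mod_cast (ZMod.intCast_zmod_eq_zero_iff_dvd q 5).mp hq5
    have : (5:ℤ) ∣ (Int.gcd p q : ℤ) := Int.dvd_coe_gcd hdp hdq
    rw [hcop] at this
    norm_num at this
  have hBne : B p q ≠ 0 := by
    intro h0
    have h5 : ((B p q : ℤ) : ZMod 11) = 0 := by rw [h0]; simp
    unfold B at h5
    push_cast at h5
    obtain ⟨hp5, hq5⟩ := zmod11_fact (p : ZMod 11) (q : ZMod 11) (by linear_combination h5)
    have hdp : (11:ℤ) ∣ p := by exact_mod_cast (ZMod.intCast_zmod_eq_zero_iff_dvd p 11).mp hp5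
    have hdq : (11:ℤ) ∣ q := by exact_mod_cast (ZMod.intCast_zmod_eq_zero_iff_dvd q 11).mp hq5
    have : (11:ℤ) ∣ (Int.gcd p q : ℤ) := Int.dvd_coe_gcd hdp hdq
    rw [hcop] at this
    norm_num at this
  have hane : a ≠ 0 := by
    intro h0
    apply hAne
    rw [haA, h0, mul_zero]
  have hbne : b ≠ 0 := by
    intro h0
    apply hBne
    rw [hbB, h0, mul_zero]
  have hxpos : 0 < x := by rw [hxa]; exact abs_pos.mpr hane
  have hypos : 0 < y := by rw [hyb]; exact abs_pos.mpr hbne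
  -- main identity
  have hxx : x^2 = a^2 := by rw [hxa, sq_abs]
  have hyy : y^2 = b^2 := by rw [hyb, sq_abs]
  have hmain : 7*a^2 + 59*b^2 = 3^(2*ω-5) := by
    have e1 : (243:ℤ)*243*(7*a^2+59*b^2) = 243*((7*q^2+59*p^2)^2) := by
      have e : 7*(A p q)^2 + 59*(B p q)^2 = 243*(7*q^2+59*p^2)^2 := by unfold A B; ring
      rw [haA, hbB] at e
      linear_combination e
    have e2 : (243:ℤ)*((7*q^2+59*p^2)^2) = 243*243*3^(2*ω-5) := by
      rw [h, ← pow_mul, show ω*2 = 5 + (2*ω-5) from by omega, pow_add]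
      norm_num
      ring
    have e3 := e1.trans e2
    exact mul_left_cancel₀ (by norm_num : ((243:ℤ)*243) ≠ 0) e3
  have hfin : 7*x^2 + 59*y^2 = 3^(2*ω-5) := by rw [hxx, hyy]; exact hmain
  refine ⟨hxpos, hypos, ?_, hfin⟩
  -- gcd
  -- 2a + b = -2pq
  have hab : 2*a + b = -2*(p*q) := by
    have e : 2*(A p q) + B p q = -486*(p*q) := by unfold A B; ring
    rw [haA, hbB] at e
    linarith
  by_contra hg
  have hgx : (Int.gcd x y : ℤ) ∣ x := Int.gcd_dvd_left x y
  have hgy : (Int.gcd x y : ℤ) ∣ y := Int.gcd_dvd_right x y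
  have hgp : (Int.gcd x y : ℤ) ∣ 3^(2*ω-5) := by
    rw [← hfin]
    exact dvd_add (Dvd.dvd.mul_left (dvd_pow hgx two_ne_zero) 7)
      (Dvd.dvd.mul_left (dvd_pow hgy two_ne_zero) 59)
  have hgn : Int.gcd x y ∣ 3^(2*ω-5) := by exact_mod_cast hgp
  obtain ⟨j, _, hje⟩ := (Nat.dvd_prime_pow Nat.prime_three).mp hgn
  have hj0 : j ≠ 0 := by
    rintro rfl
    simp at hje
    exact hg hje
  have h3g : 3 ∣ Int.gcd x y := hje ▸ dvd_pow_self 3 hj0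
  have h3x : (3:ℤ) ∣ x := dvd_trans (by exact_mod_cast h3g) hgx
  have h3y : (3:ℤ) ∣ y := dvd_trans (by exact_mod_cast h3g) hgy
  have h3a : (3:ℤ) ∣ a := (dvd_abs 3 a).mp (hxa ▸ h3x)
  have h3b : (3:ℤ) ∣ b := (dvd_abs 3 b).mp (hyb ▸ h3y)
  have h3pq : (3:ℤ) ∣ 2*(p*q) := by
    have : (3:ℤ) ∣ -(2*(p*q)) := by
      rw [show -(2*(p*q)) = 2*a + b from by linarith]
      exact dvd_add (Dvd.dvd.mul_left h3a 2) h3b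
    exact (dvd_neg).mp this
  rcases (Int.prime_three.dvd_mul.mp h3pq) with h2 | hpq
  · norm_num at h2
  · rcases (Int.prime_three.dvd_mul.mp hpq) with h' | h'
    · exact hP3 h'
    · exact hQ3 h'
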